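/- arXiv:1605.08353 — 2 statements merged into one kernel-verified Lean document; each statement's English description precedes it below -/
import Mathlib

section
/- Let q(ℓ) = e^{−Aρ_S} ρ_S^ℓ (1−ρ_S) ∑_{k=0}^ℓ (ℓ choose k)[A(1−ρ_S)]^k/k! for ℓ ∈ ℕ, with 0 < ρ_S < 1 and A > 0. Then ∑_{ℓ≥0} q(ℓ) = 1. -/
open Finset

theorem q_is_probability
    (ρS A : ℝ) (hρS0 : 0 < ρS) (hρS1 : ρS < 1) (hA : 0 < A) :
    ∑' ℓ : ℕ, Real.exp (-(A * ρS)) * ρS ^ ℓ * (1 - ρS) *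
      ∑ k ∈ Finset.range (ℓ + 1), ((ℓ.choose k : ℝ)) * (A * (1 - ρS)) ^ k / k.factorial = 1 := by
  have h1ρ : (0:ℝ) < 1 - ρS := by linarith
  set E : ℝ := Real.exp (-(A * ρS)) with hE
  set B : ℝ := A * (1 - ρS) with hB
  set f : ℕ → ℕ → ℝ := fun k ℓ =>
    if k ≤ ℓ then E * ρS ^ ℓ * (1 - ρS) * ((ℓ.choose k : ℝ) * B ^ k / k.factorial) else 0
    with hf
  have hnorm : ‖ρS‖ < 1 := by rw [Real.norm_eq_abs, abs_of_pos hρS0]; exact hρS1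
  -- row sums
  have hrow : ∀ k : ℕ, HasSum (fun ℓ => f k ℓ) (E * (A * ρS) ^ k / k.factorial) := by
    intro k
    have h0 := hasSum_choose_mul_geometric_of_norm_lt_one (𝕜 := ℝ) k hnorm
    have h1 := h0.mul_left (E * ρS ^ k * (1 - ρS) * (B ^ k / k.factorial))
    have hfac : (k.factorial : ℝ) ≠ 0 := by positivity
    have hne : ((1:ℝ) - ρS) ≠ 0 := ne_of_gt h1ρ
    have hval : E * ρS ^ k * (1 - ρS) * (B ^ k / k.factorial) * (1 / (1 - ρS) ^ (k + 1))
        = E * (A * ρS) ^ k / k.factorial := by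
      rw [hB, mul_pow, mul_pow]
      field_simp
      ring
    have h2 : HasSum (fun n => f k (n + k)) (E * (A * ρS) ^ k / k.factorial) := by
      rw [← hval]
      convert h1 using 1
      · rfl
      funext n
      have hkn : k ≤ n + k := Nat.le_add_left k n
      simp only [hf, if_pos hkn]
      rw [pow_add]
      ring
    have hinj : Function.Injective (fun n : ℕ => n + k) := add_left_injective k
    have hvanish : ∀ ℓ ∉ Set.range (fun n : ℕ => n + k), f k ℓ = 0 := by
      intro ℓ hℓ
      have : ¬ k ≤ ℓ := by
        intro hkl
        exact hℓ ⟨ℓ - k, show ℓ - k + k = ℓ by omega⟩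
      simp only [hf, if_neg this]
    exact (Function.Injective.hasSum_iff hinj hvanish).mp h2
  -- column: sum of row-sums equals 1
  have hS : HasSum (fun k : ℕ => E * (A * ρS) ^ k / k.factorial) 1 := by
    have h0 := NormedSpace.expSeries_div_hasSum_exp (A * ρS)
    have h1 := h0.mul_left E
    have : E * NormedSpace.exp (A * ρS) = 1 := by
      rw [← Real.exp_eq_exp_ℝ, hE, ← Real.exp_add]
      simp
    rw [this] at h1
    convert h1 using 2 with k
    · rfl
    ring
  -- summability of the double family
  have hfnn : ∀ p : ℕ × ℕ, 0 ≤ Function.uncurry f p := by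
    rintro ⟨k, ℓ⟩
    simp only [Function.uncurry, hf]
    split
    · have hBpos : (0:ℝ) < B := by positivity
      positivity
    · exact le_rfl
  have hsum : Summable (Function.uncurry f) := by
    rw [summable_prod_of_nonneg hfnn]
    constructor
    · intro k
      exact (hrow k).summable
    · have : (fun k : ℕ => ∑' ℓ, Function.uncurry f (k, ℓ)) =
          fun k : ℕ => E * (A * ρS) ^ k / k.factorial := by
        funext k
        exact (hrow k).tsum_eq
      rw [this]
      exact hS.summable
  -- rewrite each term of the goal as an inner tsum
  have hterm : ∀ ℓ : ℕ, (E * ρS ^ ℓ * (1 - ρS) *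
      ∑ k ∈ Finset.range (ℓ + 1), ((ℓ.choose k : ℝ)) * B ^ k / k.factorial)
      = ∑' k : ℕ, f k ℓ := by
    intro ℓ
    rw [tsum_eq_sum (s := Finset.range (ℓ + 1)) (by
      intro k hk
      have : ¬ k ≤ ℓ := by simp at hk; omega
      simp [hf, this])]
    rw [Finset.mul_sum]
    refine Finset.sum_congr rfl fun k hk => ?_
    have : k ≤ ℓ := by simp at hk; omega
    simp [hf, this, mul_div_assoc]
  calc ∑' ℓ : ℕ, (E * ρS ^ ℓ * (1 - ρS) *
        ∑ k ∈ Finset.range (ℓ + 1), ((ℓ.choose k : ℝ)) * B ^ k / k.factorial)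
      = ∑' (ℓ : ℕ) (k : ℕ), f k ℓ := tsum_congr hterm
    _ = ∑' (k : ℕ) (ℓ : ℕ), f k ℓ := Summable.tsum_comm hsum
    _ = ∑' k : ℕ, E * (A * ρS) ^ k / k.factorial := tsum_congr fun k => (hrow k).tsum_eq
    _ = 1 := hS.tsum_eq
end

section
/- Under the QS first-step model, as θ_M → ∞ (equivalently ρ_θ → ∞) with ρ_S ∈ (0,1) and ρ_M > 0 fixed, the unique positive solution A(ρ_θ) of e^{−A}(1−ρ_S) = ρ_θ A + 1 − ρ_S − ρ_M tends to 0 and ρ_θ·A(ρ_θ) → ρ_M; consequently the static throughput γ_S = C(1−ρ_S)/(1+A) tends to C(1−ρ_S). -/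
open Filter Topology

theorem QS_fast_mobility_limit
    (ρS ρM C : ℝ) (hρS0 : 0 < ρS) (hρS1 : ρS < 1) (hρM : 0 < ρM) (hC : 0 < C)
    (A : ℝ → ℝ)
    (hA : ∀ ρθ : ℝ, 0 < ρθ → 0 < A ρθ ∧
      Real.exp (-(A ρθ)) * (1 - ρS) = ρθ * A ρθ + 1 - ρS - ρM) :
    Tendsto A atTop (𝓝 0) ∧
    Tendsto (fun ρθ => ρθ * A ρθ) atTop (𝓝 ρM) ∧
    Tendsto (fun ρθ => C * (1 - ρS) / (1 + A ρθ)) atTop (𝓝 (C * (1 - ρS))) := by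
  have h1S : (0:ℝ) < 1 - ρS := by linarith
  -- upper bound: A ρθ ≤ ρM / ρθ for ρθ > 0
  have hub : ∀ ρθ : ℝ, 0 < ρθ → A ρθ ≤ ρM / ρθ := by
    intro ρθ hθ
    obtain ⟨hpos, heq⟩ := hA ρθ hθ
    have hexp : Real.exp (-(A ρθ)) ≤ 1 := by
      rw [Real.exp_le_one_iff]; linarith
    have : ρθ * A ρθ ≤ ρM := by nlinarith
    rw [div_eq_inv_mul, ← mul_le_mul_iff_right₀ hθ]
    calc ρθ * A ρθ ≤ ρM := this
      _ = ρθ * (ρθ⁻¹ * ρM) := by field_simp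
  have hAto0 : Tendsto A atTop (𝓝 0) := by
    have hlim : Tendsto (fun ρθ : ℝ => ρM / ρθ) atTop (𝓝 0) :=
      tendsto_const_nhds.div_atTop tendsto_id
    refine tendsto_of_tendsto_of_tendsto_of_le_of_le' tendsto_const_nhds hlim ?_ ?_
    · filter_upwards [eventually_gt_atTop 0] with x hx
      exact (hA x hx).1.le
    · filter_upwards [eventually_gt_atTop 0] with x hx
      exact hub x hx
  refine ⟨hAto0, ?_, ?_⟩
  · have hcongr : (fun ρθ => ρM - (1 - Real.exp (-(A ρθ))) * (1 - ρS)) =ᶠ[atTop]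
        (fun ρθ => ρθ * A ρθ) := by
      filter_upwards [eventually_gt_atTop 0] with x hx
      have heq := (hA x hx).2
      ring_nf
      ring_nf at heq
      linarith
    have hexp : Tendsto (fun ρθ => Real.exp (-(A ρθ))) atTop (𝓝 1) := by
      have := (Real.continuous_exp.tendsto 0).comp (by simpa using hAto0.neg)
      simpa [Function.comp_def] using this
    have : Tendsto (fun ρθ => ρM - (1 - Real.exp (-(A ρθ))) * (1 - ρS)) atTop
        (𝓝 (ρM - (1 - 1) * (1 - ρS))) :=
      tendsto_const_nhds.sub ((tendsto_const_nhds.sub hexp).mul tendsto_const_nhds)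
    simpa using this.congr' hcongr
  · have hden : Tendsto (fun ρθ => 1 + A ρθ) atTop (𝓝 1) := by
      simpa using tendsto_const_nhds.add hAto0
    have := (tendsto_const_nhds (x := C * (1 - ρS)) (f := atTop)).div hden one_ne_zero
    simpa [Pi.div_def] using this
end
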